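/- arXiv:0810.0170 — 4 statements merged into one kernel-verified Lean document; each statement's English description precedes it below -/
import Mathlib

section
/- Let x₁, …, x_N be points in ℝ^m with N ≥ ℓ(m+2) for positive integers ℓ, m. Then there exist ℓ pairwise disjoint nonempty subsets S₁, …, S_ℓ of {1,…,N} and a single point p ∈ ℝ^m such that p lies in the convex hull of {x_i : i ∈ S_k} for every k = 1, …, ℓ. (Iterated Radon argument guaranteeing ℓ convex combinations with a common value.) -/
open Metric Finset Module
open scoped RealInnerProductSpace

section Helpers

variable {E : Type*} [NormedAddCommGroup E] [InnerProductSpace ℝ E]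



lemma weights_of_mem_convexHull_range {V : Type*} [AddCommGroup V] [Module ℝ V]
    {κ : Type*} [Fintype κ] (f : κ → V) {x : V}
    (hx : x ∈ convexHull ℝ (Set.range f)) :
    ∃ μ : κ → ℝ, (∀ j, 0 ≤ μ j) ∧ ∑ j, μ j = 1 ∧ ∑ j, μ j • f j = x := by
  classical
  rw [show Set.range f = ↑(Finset.univ.image f) by simp, Finset.convexHull_eq] at hx
  obtain ⟨w, hw0, hw1, hwx⟩ := hx
  set c : κ → ℕ := fun j => (univ.filter fun j' => f j' = f j).card with hc
  set μ : κ → ℝ := fun j => w (f j) / c j with hμ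
  have hcpos : ∀ j, 0 < c j := by
    intro j
    apply Finset.card_pos.2 ⟨j, by simp⟩
  have hμsame : ∀ i : κ, ∀ j ∈ univ.filter (fun j' => f j' = f i), μ j = w (f i) / c i := by
    intro i j hj
    simp only [mem_filter, mem_univ, true_and] at hj
    have hcij : c j = c i := by
      simp only [hc]
      congr 1
      apply Finset.filter_congr
      intro j' _
      simp [hj]
    simp [hμ, hj, hcij]
  have key : ∀ i : κ, ∑ j ∈ univ.filter (fun j' => f j' = f i), μ j = w (f i) := by
    intro i
    rw [Finset.sum_congr rfl (hμsame i), Finset.sum_const, nsmul_eq_mul]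
    have : ((univ.filter fun j' => f j' = f i).card : ℝ) = (c i : ℝ) := by simp [hc]
    rw [this, mul_div_cancel₀]
    exact_mod_cast (hcpos i).ne'
  have hsum : ∑ j, μ j = 1 := by
    rw [← hw1, Finset.sum_image' μ (fun i _ => (key i).symm)]
  have hvec : ∑ j, μ j • f j = x := by
    have h2 : ∀ i ∈ univ, w (f i) • f i = ∑ j ∈ univ.filter (fun j' => f j' = f i), μ j • f j := by
      intro i _
      have : ∀ j ∈ univ.filter (fun j' => f j' = f i), μ j • f j = μ j • f i := by
        intro j hj
        simp only [mem_filter, mem_univ, true_and] at hj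
        rw [hj]
      rw [Finset.sum_congr rfl this, ← Finset.sum_smul, key i]
    have h3 := Finset.sum_image' (f := fun y => w y • y) (g := f) (s := univ)
      (fun j => μ j • f j) h2
    rw [← h3]
    rw [Finset.centerMass_eq_of_sum_1 _ id hw1] at hwx
    simpa using hwx
  refine ⟨μ, fun j => ?_, hsum, hvec⟩
  exact div_nonneg (hw0 (f j) (mem_image_of_mem f (mem_univ j))) (by positivity)





lemma nearest_inner {K : Set E} (hK : Convex ℝ K) {p : E} (hp : p ∈ K)
    (hmin : ∀ y ∈ K, ‖p‖ ≤ ‖y‖) : ∀ y ∈ K, ⟪p, p⟫ ≤ ⟪p, y⟫ := by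
  intro y hy
  by_contra hlt
  push_neg at hlt
  set A : ℝ := ⟪p, y - p⟫ with hA
  have hAneg : A < 0 := by
    rw [hA, inner_sub_right]; linarith
  set B : ℝ := ⟪y - p, y - p⟫ with hB
  have hyp : y - p ≠ 0 := by
    intro h
    rw [h] at hA
    simp [hA] at hAneg
  have hBpos : 0 < B := by
    rw [hB, real_inner_self_eq_norm_mul_norm]
    exact mul_pos (norm_pos_iff.2 hyp) (norm_pos_iff.2 hyp)
  set t : ℝ := min 1 (-A / B) with ht
  have ht0 : 0 < t := lt_min one_pos (div_pos (by linarith) hBpos)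
  have ht1 : t ≤ 1 := min_le_left _ _
  have hz : (1 - t) • p + t • y ∈ K := hK hp hy (by linarith) (le_of_lt ht0) (by ring)
  have hzq : (1 - t) • p + t • y = p + t • (y - p) := by
    module
  have hn := hmin _ hz
  have hsq : ⟪p, p⟫ ≤ ⟪p + t • (y - p), p + t • (y - p)⟫ := by
    rw [real_inner_self_eq_norm_mul_norm, real_inner_self_eq_norm_mul_norm, ← hzq]
    exact mul_le_mul hn hn (norm_nonneg _) (norm_nonneg _)
  have hexp : ⟪p + t • (y - p), p + t • (y - p)⟫
      = ⟪p, p⟫ + 2 * t * A + t ^ 2 * B := by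
    rw [real_inner_add_add_self, real_inner_smul_right, real_inner_smul_left,
      real_inner_smul_right, hA, hB]
    ring
  rw [hexp] at hsq
  have hkey : 0 ≤ 2 * A + t * B := by nlinarith
  rcases le_or_gt (-A / B) 1 with hc | hc
  · have : t = -A / B := by rw [ht, min_eq_right hc]
    rw [this] at hkey
    rw [div_mul_cancel₀] at hkey
    · linarith
    · exact hBpos.ne'
  · have htt : t = 1 := by rw [ht, min_eq_left (le_of_lt hc)]
    have hBA : B < -A := by
      have := (lt_div_iff₀ hBpos).1 hc
      linarith
    rw [htt] at hkey
    linarith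






set_option maxHeartbeats 2000000 in
lemma colorful_caratheodory {ι κ : Type} [Fintype ι] [Fintype κ] [DecidableEq κ]
    (hcard : Fintype.card ι < Fintype.card κ)
    (C : κ → Finset (EuclideanSpace ℝ ι))
    (hCne : ∀ j, (C j).Nonempty)
    (hC0 : ∀ j, (0 : EuclideanSpace ℝ ι) ∈ convexHull ℝ (↑(C j) : Set (EuclideanSpace ℝ ι))) :
    ∃ f : κ → EuclideanSpace ℝ ι, (∀ j, f j ∈ C j) ∧
      (0 : EuclideanSpace ℝ ι) ∈ convexHull ℝ (Set.range f) := by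
  classical
  obtain ⟨f, hfmem, hfmin⟩ := Finset.exists_min_image (Fintype.piFinset C)
      (fun f => infDist 0 (convexHull ℝ (Set.range f)))
      (Fintype.piFinset_nonempty.2 hCne)
  have hfC : ∀ j, f j ∈ C j := by simpa [Fintype.mem_piFinset] using hfmem
  set K : Set (EuclideanSpace ℝ ι) := convexHull ℝ (Set.range f) with hKdef
  have hKcvx : Convex ℝ K := convex_convexHull ℝ _
  have hKcpt : IsCompact K := (Set.finite_range f).isCompact_convexHull (𝕜 := ℝ)
  haveI hκne : Nonempty κ := Fintype.card_pos_iff.1 (lt_of_le_of_lt (Nat.zero_le _) hcard)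
  have hKne : K.Nonempty := ⟨f (Classical.arbitrary κ),
    subset_convexHull ℝ _ (Set.mem_range_self _)⟩
  obtain ⟨p, hpK, hpd⟩ := hKcpt.exists_infDist_eq_dist hKne 0
  by_cases hp0 : p = 0
  · exact ⟨f, hfC, hp0 ▸ hpK⟩
  exfalso
  rw [dist_zero_left] at hpd
  have hmin : ∀ y ∈ K, ‖p‖ ≤ ‖y‖ := fun y hy => by
    rw [← hpd]
    have h : infDist (0 : EuclideanSpace ℝ ι) K ≤ dist 0 y := infDist_le_dist_of_mem hy
    rwa [dist_eq_norm, zero_sub, norm_neg] at h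
  have hvar := nearest_inner hKcvx hpK hmin
  have hppos : (0:ℝ) < ⟪p, p⟫ := by
    rw [real_inner_self_eq_norm_mul_norm]
    exact mul_pos (norm_pos_iff.2 hp0) (norm_pos_iff.2 hp0)
  -- affinely independent positive decomposition of p
  obtain ⟨ι', hfin, z, wgt, hzran, hzai, hwpos, hwsum, hwx⟩ :=
    eq_pos_convex_span_of_mem_convexHull hpK
  have hne' : Nonempty ι' := by
    by_contra h
    rw [not_nonempty_iff] at h
    simp [Finset.univ_eq_empty] at hwsum
  have hzK : ∀ i, z i ∈ K := fun i => subset_convexHull ℝ _ (hzran (Set.mem_range_self i))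
  have hup : ∀ i, ⟪p, p⟫ ≤ ⟪p, z i⟫ := fun i => hvar _ (hzK i)
  have hinsum : ∑ i, wgt i * ⟪p, z i⟫ = ⟪p, p⟫ := by
    calc ∑ i, wgt i * ⟪p, z i⟫ = ⟪p, ∑ i, wgt i • z i⟫ := by
          rw [inner_sum]
          simp_rw [real_inner_smul_right]
      _ = ⟪p, p⟫ := by rw [hwx]
  have heq : ∀ i, ⟪p, z i⟫ = ⟪p, p⟫ := by
    have hsum0 : ∑ i, wgt i * (⟪p, z i⟫ - ⟪p, p⟫) = 0 := by
      simp only [mul_sub]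
      rw [Finset.sum_sub_distrib, hinsum, ← Finset.sum_mul, hwsum, one_mul, sub_self]
    intro i
    have h0 := (Finset.sum_eq_zero_iff_of_nonneg
      (fun i _ => mul_nonneg (hwpos i).le (by linarith [hup i]))).1 hsum0 i (Finset.mem_univ i)
    rcases mul_eq_zero.1 h0 with h | h
    · exact absurd h (hwpos i).ne'
    · linarith
  -- the support is small : card ι' ≤ card ι
  set φ : EuclideanSpace ℝ ι →ₗ[ℝ] ℝ := (innerSL ℝ p).toLinearMap with hφ
  have hφap : ∀ v, φ v = ⟪p, v⟫ := fun v => rfl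
  have hrange : LinearMap.range φ = ⊤ := by
    rw [LinearMap.range_eq_top]
    intro a
    refine ⟨(a / ⟪p, p⟫) • p, ?_⟩
    rw [hφap, real_inner_smul_right, div_mul_cancel₀ _ hppos.ne']
  have hker : finrank ℝ (LinearMap.ker φ) + 1 = Fintype.card ι := by
    have h := LinearMap.finrank_range_add_finrank_ker φ
    rw [hrange, finrank_top, finrank_self, finrank_euclideanSpace] at h
    · omega
  have hvs : vectorSpan ℝ (Set.range z) ≤ LinearMap.ker φ := by
    rw [vectorSpan_def]
    apply Submodule.span_le.2
    rintro v ⟨a, ha, b, hb, rfl⟩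
    obtain ⟨i, rfl⟩ := ha
    obtain ⟨i', rfl⟩ := hb
    simp [LinearMap.mem_ker, hφap, vsub_eq_sub, inner_sub_right, heq i, heq i']
  have hcard' : Fintype.card ι' ≤ Fintype.card ι := by
    have h1 := hzai.finrank_vectorSpan (n := Fintype.card ι' - 1)
      (Nat.succ_pred_eq_of_pos Fintype.card_pos).symm
    have h2 : finrank ℝ (vectorSpan ℝ (Set.range z)) ≤ finrank ℝ (LinearMap.ker φ) :=
      Submodule.finrank_mono hvs
    have h3 := Fintype.card_pos (α := ι')
    omega
  -- pick an unused color
  have hcz : ∀ i : ι', ∃ j, f j = z i := fun i => hzran (Set.mem_range_self i)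
  choose col hcol using hcz
  obtain ⟨j₀, hj₀⟩ : ∃ j₀, j₀ ∉ Finset.univ.image col := by
    by_contra h
    push_neg at h
    have huniv : Finset.univ.image col = Finset.univ := Finset.eq_univ_iff_forall.2 h
    have := Finset.card_image_le (s := (Finset.univ : Finset ι')) (f := col)
    rw [huniv] at this
    simp only [Finset.card_univ] at this
    omega
  -- an element of C j₀ on the far side
  obtain ⟨z₀, hz₀C, hz₀⟩ : ∃ z₀ ∈ C j₀, ⟪p, z₀⟫ ≤ 0 := by
    by_contra h
    push_neg at h
    obtain ⟨ι₀, hfin₀, z', w', hran', _, hpos', hsum', hx'⟩ :=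
      eq_pos_convex_span_of_mem_convexHull (hC0 j₀)
    have hne₀ : Nonempty ι₀ := by
      by_contra hh
      rw [not_nonempty_iff] at hh
      simp [Finset.univ_eq_empty] at hsum'
    have hgt : (0:ℝ) < ∑ i, w' i * ⟪p, z' i⟫ :=
      Finset.sum_pos (fun i _ => mul_pos (hpos' i) (h _ (hran' (Set.mem_range_self i))))
        Finset.univ_nonempty
    have hzero : ∑ i, w' i * ⟪p, z' i⟫ = 0 := by
      calc ∑ i, w' i * ⟪p, z' i⟫ = ⟪p, ∑ i, w' i • z' i⟫ := by
            rw [inner_sum]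
            simp_rw [real_inner_smul_right]
        _ = 0 := by rw [hx', inner_zero_right]
    rw [hzero] at hgt
    exact lt_irrefl _ hgt
  -- the improved transversal
  set f' : κ → EuclideanSpace ℝ ι := Function.update f j₀ z₀ with hf'
  have hf'C : ∀ j, f' j ∈ C j := by
    intro j
    by_cases hjj : j = j₀
    · subst hjj; simp [hf', hz₀C]
    · simp [hf', Function.update_of_ne hjj, hfC j]
  set K' : Set (EuclideanSpace ℝ ι) := convexHull ℝ (Set.range f') with hK'def
  have hzf' : ∀ i, z i ∈ Set.range f' := by
    intro i
    refine ⟨col i, ?_⟩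
    have hne : col i ≠ j₀ := fun hc => hj₀ (hc ▸ Finset.mem_image_of_mem col (Finset.mem_univ i))
    rw [hf', Function.update_of_ne hne, hcol i]
  have hpK' : p ∈ K' := mem_convexHull_of_exists_fintype wgt z (fun i => (hwpos i).le)
    hwsum hzf' hwx
  have hz₀K' : z₀ ∈ K' := subset_convexHull ℝ _ ⟨j₀, by rw [hf', Function.update_self]⟩
  obtain ⟨P, hPd⟩ : ∃ P : ℝ, ⟪p, p⟫ = P := ⟨_, rfl⟩
  obtain ⟨A, hAd⟩ : ∃ A : ℝ, ⟪p, z₀ - p⟫ = A := ⟨_, rfl⟩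
  obtain ⟨B, hBd⟩ : ∃ B : ℝ, ⟪z₀ - p, z₀ - p⟫ = B := ⟨_, rfl⟩
  have hPpos : (0:ℝ) < P := hPd ▸ hppos
  have hAle : A ≤ -P := by
    rw [← hAd, ← hPd, inner_sub_right]
    linarith
  have hz₀p : z₀ - p ≠ 0 := by
    intro h
    rw [sub_eq_zero] at h
    rw [h, hPd] at hz₀
    linarith
  have hBpos : (0:ℝ) < B := by
    rw [← hBd, real_inner_self_eq_norm_mul_norm]
    exact mul_pos (norm_pos_iff.2 hz₀p) (norm_pos_iff.2 hz₀p)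
  obtain ⟨s, hsd⟩ : ∃ s : ℝ, s = min 1 (P / B) := ⟨_, rfl⟩
  have hs0 : 0 < s := hsd ▸ lt_min one_pos (div_pos hPpos hBpos)
  have hs1 : s ≤ 1 := hsd ▸ min_le_left _ _
  obtain ⟨q, hqd⟩ : ∃ q : EuclideanSpace ℝ ι, q = p + s • (z₀ - p) := ⟨_, rfl⟩
  have hqK' : q ∈ K' := by
    have hcomb : q = (1 - s) • p + s • z₀ := by rw [hqd]; module
    rw [hcomb]
    exact (convex_convexHull ℝ _) hpK' hz₀K' (by linarith) hs0.le (by ring)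
  have hqq : ⟪q, q⟫ = P + 2 * s * A + s ^ 2 * B := by
    rw [hqd, real_inner_add_add_self, real_inner_smul_right, real_inner_smul_left,
      real_inner_smul_right, hPd, hAd, hBd]
    ring
  have hqlt : ⟪q, q⟫ < P := by
    rw [hqq]
    rcases le_or_gt (P / B) 1 with hc | hc
    · have hseq : s = P / B := by rw [hsd, min_eq_right hc]
      have htpos : (0:ℝ) < P / B := div_pos hPpos hBpos
      have h1 : P / B * B = P := div_mul_cancel₀ _ hBpos.ne'
      have h2 : P / B * A ≤ P / B * (-P) := mul_le_mul_of_nonneg_left hAle htpos.le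
      rw [hseq]
      nlinarith [mul_pos htpos hPpos]
    · have hseq : s = 1 := by rw [hsd, min_eq_left hc.le]
      have hBlt : B < P := by
        have h3 := (lt_div_iff₀ hBpos).1 hc
        linarith
      rw [hseq]
      linarith
  have hqnorm : ‖q‖ < ‖p‖ := by
    by_contra hcon
    push_neg at hcon
    rw [real_inner_self_eq_norm_mul_norm] at hqlt
    rw [real_inner_self_eq_norm_mul_norm] at hPd
    have hmm := mul_le_mul hcon hcon (norm_nonneg p) (norm_nonneg q)
    linarith
  have hf'pi : f' ∈ Fintype.piFinset C := Fintype.mem_piFinset.2 hf'C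
  have h1 := hfmin f' hf'pi
  rw [hpd] at h1
  have h2 : infDist (0 : EuclideanSpace ℝ ι) K' ≤ dist 0 q := infDist_le_dist_of_mem hqK'
  rw [dist_eq_norm, zero_sub, norm_neg] at h2
  simp only [← hK'def] at h1
  linarith

end Helpers




set_option maxHeartbeats 2000000 in
/-- iterated Radon argument: given `N ≥ ℓ(m+2)` points in `ℝ^m`,
there exist `ℓ` pairwise disjoint nonempty index sets and a common point lying in
the convex hull of each corresponding group of points. -/
theorem stmt_6 (m ℓ N : ℕ) (hm : 0 < m) (hℓ : 0 < ℓ) (hN : ℓ * (m + 2) ≤ N)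
    (x : Fin N → (Fin m → ℝ)) :
    ∃ S : Fin ℓ → Finset (Fin N),
      (∀ k, (S k).Nonempty) ∧
      (Pairwise fun k k' => Disjoint (S k) (S k')) ∧
      ∃ p : Fin m → ℝ, ∀ k, p ∈ convexHull ℝ (x '' ((S k : Set (Fin N)))) := by
  classical
  obtain ⟨L, rfl⟩ : ∃ L, ℓ = L + 1 := ⟨ℓ - 1, (Nat.succ_pred_eq_of_pos hℓ).symm⟩
  set n : ℕ := (m + 1) * L + 1 with hn
  have hnN : n ≤ N := by nlinarith
  have hcard : Fintype.card (Fin (m + 1) × Fin L) < Fintype.card (Fin n) := by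
    simp only [Fintype.card_prod, Fintype.card_fin, hn]
    omega
  set v : Fin n → (Fin (m + 1) → ℝ) :=
    fun j s => if h : (s : ℕ) < m then x (Fin.castLE hnN j) ⟨s, h⟩ else 1 with hv
  set u : Fin (L + 1) → (Fin L → ℝ) :=
    fun i t => (if (i : ℕ) = (t : ℕ) then 1 else 0) - (if (i : ℕ) = L then 1 else 0) with hu
  set w : Fin n → Fin (L + 1) → EuclideanSpace ℝ (Fin (m + 1) × Fin L) :=
    fun j i => WithLp.toLp 2 (fun st => v j st.1 * u i st.2) with hw
  have husum : ∀ t : Fin L, ∑ i : Fin (L + 1), u i t = 0 := by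
    intro t
    simp only [hu]
    rw [Finset.sum_sub_distrib]
    have h1 : ∑ i : Fin (L + 1), (if (i : ℕ) = (t : ℕ) then (1:ℝ) else 0) = 1 := by
      rw [Finset.sum_eq_single t.castSucc]
      · simp
      · intro b _ hb
        rw [if_neg]
        intro hc
        exact hb (Fin.ext (by simpa using hc))
      · simp
    have h2 : ∑ i : Fin (L + 1), (if (i : ℕ) = L then (1:ℝ) else 0) = 1 := by
      rw [Finset.sum_eq_single (Fin.last L)]
      · simp
      · intro b _ hb
        rw [if_neg]
        intro hc
        exact hb (Fin.ext (by simpa using hc))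
      · simp
    rw [h1, h2, sub_self]
  set C : Fin n → Finset (EuclideanSpace ℝ (Fin (m + 1) × Fin L)) :=
    fun j => Finset.univ.image (w j) with hC
  have hCne : ∀ j, (C j).Nonempty := fun j => ⟨w j 0, Finset.mem_image_of_mem _ (Finset.mem_univ 0)⟩
  have hwsum0 : ∀ j, ∑ i : Fin (L + 1), w j i = (0 : EuclideanSpace ℝ (Fin (m + 1) × Fin L)) := by
    intro j
    ext st
    have hap := map_sum (EuclideanSpace.projₗ (𝕜 := ℝ) st) (fun i => w j i) Finset.univ
    have : (∑ i : Fin (L + 1), w j i) st = ∑ i : Fin (L + 1), w j i st := hap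
    rw [this]
    have : ∀ i : Fin (L + 1), w j i st = v j st.1 * u i st.2 := fun i => rfl
    simp only [this]
    rw [← Finset.mul_sum, husum st.2, mul_zero]
    rfl
  have hC0 : ∀ j, (0 : EuclideanSpace ℝ (Fin (m + 1) × Fin L)) ∈ convexHull ℝ
      (↑(C j) : Set (EuclideanSpace ℝ (Fin (m + 1) × Fin L))) := by
    intro j
    refine mem_convexHull_of_exists_fintype (fun _ : Fin (L + 1) => ((L : ℝ) + 1)⁻¹) (w j)
      (fun _ => by positivity) ?_ (fun i => Finset.mem_image_of_mem _ (Finset.mem_univ i)) ?_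
    · rw [Finset.sum_const, Finset.card_univ, Fintype.card_fin, nsmul_eq_mul]
      push_cast
      exact mul_inv_cancel₀ (by positivity)
    · rw [← Finset.smul_sum, hwsum0 j, smul_zero]
  obtain ⟨f, hfC, hf0⟩ := colorful_caratheodory hcard C hCne hC0
  have hfw : ∀ j, ∃ i, w j i = f j := by
    intro j
    obtain ⟨i, _, hi⟩ := Finset.mem_image.1 (hfC j)
    exact ⟨i, hi⟩
  choose g hg using hfw
  obtain ⟨μ, hμ0, hμ1, hμf⟩ := weights_of_mem_convexHull_range f hf0
  have hμw : ∑ j, μ j • w j (g j) = (0 : EuclideanSpace ℝ (Fin (m + 1) × Fin L)) := by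
    rw [← hμf]
    exact Finset.sum_congr rfl (fun j _ => by rw [hg j])
  have heval : ∀ (s : Fin (m + 1)) (t : Fin L), ∑ j, μ j * (v j s * u (g j) t) = 0 := by
    intro s t
    have h := congrArg (EuclideanSpace.projₗ (𝕜 := ℝ) (s, t)) hμw
    rw [map_sum, map_zero] at h
    simp only [map_smul, smul_eq_mul] at h
    exact h
  set T : Fin (L + 1) → Finset (Fin n) := fun i => Finset.univ.filter (fun j => g j = i) with hT
  set z : Fin (L + 1) → Fin (m + 1) → ℝ :=
    fun i s => ∑ j, if g j = i then μ j * v j s else 0 with hz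
  have hzfilter : ∀ i s, z i s = ∑ j ∈ T i, μ j * v j s := by
    intro i s
    rw [hz, hT]
    exact (Finset.sum_filter _ _).symm
  have hsplit : ∀ (s : Fin (m + 1)) (t : Fin L), z t.castSucc s - z (Fin.last L) s = 0 := by
    intro s t
    have h := heval s t
    have hterm : ∀ j, μ j * (v j s * u (g j) t) =
        (if g j = t.castSucc then μ j * v j s else 0)
          - (if g j = Fin.last L then μ j * v j s else 0) := by
      intro j
      have h1 : ((g j : ℕ) = (t : ℕ)) ↔ g j = t.castSucc := by
        rw [Fin.ext_iff, Fin.coe_castSucc]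
      have h2 : ((g j : ℕ) = L) ↔ g j = Fin.last L := by
        rw [Fin.ext_iff, Fin.val_last]
      have hugj : u (g j) t = (if g j = t.castSucc then (1:ℝ) else 0)
          - (if g j = Fin.last L then 1 else 0) := by
        simp only [hu]
        congr 1
        exacts [if_congr h1 rfl rfl, if_congr h2 rfl rfl]
      rw [hugj]
      split_ifs <;> ring
    rw [Finset.sum_congr rfl (fun j _ => hterm j), Finset.sum_sub_distrib] at h
    rw [hz]
    exact h
  have hzeq : ∀ i, z i = z (Fin.last L) := by
    intro i
    refine Fin.lastCases rfl (fun t => ?_) i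
    funext s
    have h := hsplit s t
    have : z t.castSucc s = z (Fin.last L) s := by linarith
    exact this
  have hvlast : ∀ j, v j (Fin.last m) = 1 := by
    intro j
    rw [hv]
    simp
  have hmass : ∀ i, ∑ j ∈ T i, μ j = z i (Fin.last m) := by
    intro i
    rw [hzfilter]
    exact Finset.sum_congr rfl (fun j _ => by rw [hvlast j, mul_one])
  have hmasseq : ∀ i, ∑ j ∈ T i, μ j = ∑ j ∈ T (Fin.last L), μ j := by
    intro i
    rw [hmass, hmass, hzeq i]
  have htot : ∑ i : Fin (L + 1), ∑ j ∈ T i, μ j = 1 := by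
    rw [hT, ← hμ1]
    exact Finset.sum_fiberwise _ _ _
  have hMval : ((L : ℝ) + 1) * (∑ j ∈ T (Fin.last L), μ j) = 1 := by
    have h := htot
    rw [Finset.sum_congr rfl (fun i _ => hmasseq i), Finset.sum_const, Finset.card_univ,
      Fintype.card_fin, nsmul_eq_mul] at h
    push_cast at h
    linarith
  have hmpos : ∀ i, 0 < ∑ j ∈ T i, μ j := by
    intro i
    rw [hmasseq i]
    nlinarith [hMval, Nat.cast_nonneg (α := ℝ) L]
  have hTne : ∀ i, (T i).Nonempty := by
    intro i
    rw [Finset.nonempty_iff_ne_empty]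
    intro h
    have := hmpos i
    rw [h, Finset.sum_empty] at this
    exact lt_irrefl 0 this
  set p : Fin m → ℝ := fun s' => ((L : ℝ) + 1) * z (Fin.last L) s'.castSucc with hp
  set S : Fin (L + 1) → Finset (Fin N) := fun k => (T k).image (Fin.castLE hnN) with hS
  have hvc : ∀ j (s' : Fin m), v j s'.castSucc = x (Fin.castLE hnN j) s' := by
    intro j s'
    simp only [hv]
    rw [dif_pos (by simpa using s'.isLt)]
    exact congrArg _ (Fin.ext (by simp))
  refine ⟨S, fun k => (hTne k).image _, ?_, p, ?_⟩
  · intro k k' hkk'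
    rw [Finset.disjoint_left]
    rintro a ha ha'
    obtain ⟨j1, hj1, hj1e⟩ := Finset.mem_image.1 ha
    obtain ⟨j2, hj2, hj2e⟩ := Finset.mem_image.1 ha'
    have : j1 = j2 := Fin.castLE_injective hnN (hj1e.trans hj2e.symm)
    subst this
    rw [hT, Finset.mem_filter] at hj1 hj2
    exact hkk' (hj1.2.symm.trans hj2.2)
  · intro k
    have hpts : ∀ j ∈ T k, (fun j => x (Fin.castLE hnN j)) j ∈ x '' ((S k : Set (Fin N))) := by
      intro j hj
      exact ⟨Fin.castLE hnN j, Finset.mem_coe.2 (Finset.mem_image_of_mem _ hj), rfl⟩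
    have hcm := Finset.centerMass_mem_convexHull (T k) (fun j _ => hμ0 j) (hmpos k) hpts
    have hpc : p = (T k).centerMass μ (fun j => x (Fin.castLE hnN j)) := by
      rw [Finset.centerMass]
      funext s'
      rw [Pi.smul_apply, Finset.sum_apply, smul_eq_mul]
      have hinv : (∑ j ∈ T k, μ j)⁻¹ = (L : ℝ) + 1 := by
        rw [hmasseq k]
        exact inv_eq_of_mul_eq_one_left hMval
      rw [hinv]
      have hzz : z (Fin.last L) s'.castSucc = ∑ j ∈ T k, μ j * x (Fin.castLE hnN j) s' := by
        rw [← hzeq k, hzfilter]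
        exact Finset.sum_congr rfl (fun j _ => by rw [hvc j s'])
      rw [hp]
      simp only [Pi.smul_apply, smul_eq_mul]
      rw [hzz, Finset.mul_sum]
    rw [hpc]
    exact hcm
end

section
/- Let P be an orthogonal projection on a finite-dimensional Hilbert space H, and let F₁, …, F_r be operators such that for some λ_j ≥ 0 and unitaries U_j one has F_j P = √λ_j · U_j P for each j, with P_j := U_j P U_j†. If moreover (P F_i† F_j P) = δ_{ij} λ_j P for all i, j, then the projections P_j with λ_j > 0 are pairwise orthogonal: P_i P_j = 0 for i ≠ j (when λ_i, λ_j > 0). -/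
/-- let `P` be an orthogonal projection and `F_j` operators with
`F_j P = √λ_j U_j P` for unitaries `U_j`, `λ_j ≥ 0`, and `P_j := U_j P U_j†`.
If `P F_i† F_j P = δ_{ij} λ_j P`, then the `P_j` with `λ_j > 0` are pairwise
orthogonal: `P_i P_j = 0` for `i ≠ j`. -/
theorem stmt_8 (H : Type*) [NormedAddCommGroup H] [InnerProductSpace ℂ H]
    [FiniteDimensional ℂ H] (r : ℕ) (P : H →ₗ[ℂ] H)
    (hPproj : P ∘ₗ P = P) (hPsa : LinearMap.adjoint P = P)
    (F : Fin r → (H →ₗ[ℂ] H)) (U : Fin r → (H →ₗ[ℂ] H))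
    (hU : ∀ j, LinearMap.adjoint (U j) ∘ₗ U j = LinearMap.id ∧
      U j ∘ₗ LinearMap.adjoint (U j) = LinearMap.id)
    (lam : Fin r → ℝ) (hlam : ∀ j, 0 ≤ lam j)
    (hF : ∀ j, F j ∘ₗ P = (Real.sqrt (lam j) : ℂ) • (U j ∘ₗ P))
    (hKL : ∀ i j, P ∘ₗ LinearMap.adjoint (F i) ∘ₗ F j ∘ₗ P =
      (if i = j then (lam j : ℂ) else 0) • P) :
    ∀ i j, i ≠ j → 0 < lam i → 0 < lam j →
      (U i ∘ₗ P ∘ₗ LinearMap.adjoint (U i)) ∘ₗ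
        (U j ∘ₗ P ∘ₗ LinearMap.adjoint (U j)) = 0 := by
  intro i j hij hi hj
  -- key: P ∘ U i† ∘ U j ∘ P = 0
  have hadj : ∀ k, LinearMap.adjoint (F k ∘ₗ P)
      = (Real.sqrt (lam k) : ℂ) • (P ∘ₗ LinearMap.adjoint (U k)) := by
    intro k
    rw [hF k, map_smulₛₗ, LinearMap.adjoint_comp, hPsa]
    simp [Complex.conj_ofReal]
  have hcomp : P ∘ₗ LinearMap.adjoint (F i) ∘ₗ F j ∘ₗ P
      = ((Real.sqrt (lam i) * Real.sqrt (lam j) : ℝ) : ℂ) •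
        (P ∘ₗ LinearMap.adjoint (U i) ∘ₗ U j ∘ₗ P) := by
    have : P ∘ₗ LinearMap.adjoint (F i) ∘ₗ F j ∘ₗ P
        = (LinearMap.adjoint (F i ∘ₗ P)) ∘ₗ (F j ∘ₗ P) := by
      rw [LinearMap.adjoint_comp, hPsa]
      ext x; simp [LinearMap.comp_apply]
    rw [this, hadj i, hF j]
    simp only [LinearMap.smul_comp, LinearMap.comp_smul, smul_smul]
    push_cast
    rw [mul_comm]
    ext x; simp [LinearMap.comp_apply]
  have hzero : P ∘ₗ LinearMap.adjoint (U i) ∘ₗ U j ∘ₗ P = 0 := by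
    have h := hKL i j
    rw [if_neg hij, zero_smul, hcomp] at h
    have hne : ((Real.sqrt (lam i) * Real.sqrt (lam j) : ℝ) : ℂ) ≠ 0 := by
      have h1 := Real.sqrt_pos.2 hi
      have h2 := Real.sqrt_pos.2 hj
      exact_mod_cast (mul_pos h1 h2).ne'
    exact (smul_eq_zero.1 h).resolve_left hne
  ext x
  have := congrArg (fun T : H →ₗ[ℂ] H =>
    U i (T (LinearMap.adjoint (U j) x))) hzero
  simpa [LinearMap.comp_apply] using this
end

section
/- Under the hypotheses above, for every density operator ρ with PρP = ρ, the channel output Σ_j F_j ρ F_j† equals Σ_j λ_j P_j (U_j ρ U_j†) P_j, i.e. it is a block-diagonal mixture over the orthogonal subspaces ran(P_j), and the recovery map R(σ) := Σ_j U_j† P_j σ P_j U_j satisfies R(Σ_j F_j ρ F_j†) = (Σ_j λ_j) ρ. In particular if Σ_j λ_j = 1, recovery is perfect. -/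
/-- with `F_j P = √λ_j U_j P`, `P_j := U_j P U_j†` pairwise orthogonal
projections, for every density operator `ρ` supported on the code subspace
(`P ρ P = ρ`), the channel output `Σ_j F_j ρ F_j†` equals the block mixture
`Σ_j λ_j P_j (U_j ρ U_j†) P_j`, and the recovery map
`R(σ) = Σ_j U_j† P_j σ P_j U_j` satisfies `R(Σ_j F_j ρ F_j†) = (Σ_j λ_j) ρ`;
in particular recovery is perfect when `Σ_j λ_j = 1`. -/
theorem stmt_9 (H : Type*) [NormedAddCommGroup H] [InnerProductSpace ℂ H]
    [FiniteDimensional ℂ H] (r : ℕ) (P : H →ₗ[ℂ] H)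
    (hPproj : P ∘ₗ P = P) (hPsa : LinearMap.adjoint P = P)
    (F : Fin r → (H →ₗ[ℂ] H)) (U : Fin r → (H →ₗ[ℂ] H))
    (hU : ∀ j, LinearMap.adjoint (U j) ∘ₗ U j = LinearMap.id ∧
      U j ∘ₗ LinearMap.adjoint (U j) = LinearMap.id)
    (lam : Fin r → ℝ) (hlam : ∀ j, 0 ≤ lam j)
    (hF : ∀ j, F j ∘ₗ P = (Real.sqrt (lam j) : ℂ) • (U j ∘ₗ P))
    (hPorth : ∀ i j, i ≠ j →
      (U i ∘ₗ P ∘ₗ LinearMap.adjoint (U i)) ∘ₗ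
        (U j ∘ₗ P ∘ₗ LinearMap.adjoint (U j)) = 0)
    (ρ : H →ₗ[ℂ] H) (hρpos : ∀ x : H, 0 ≤ (inner ℂ x (ρ x) : ℂ).re ∧
      (inner ℂ x (ρ x) : ℂ).im = 0)
    (hρtr : LinearMap.trace ℂ H ρ = 1) (hρcode : P ∘ₗ ρ ∘ₗ P = ρ) :
    (∑ j, F j ∘ₗ ρ ∘ₗ LinearMap.adjoint (F j)) =
      (∑ j, (lam j : ℂ) •
        ((U j ∘ₗ P ∘ₗ LinearMap.adjoint (U j)) ∘ₗ
          (U j ∘ₗ ρ ∘ₗ LinearMap.adjoint (U j)) ∘ₗ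
          (U j ∘ₗ P ∘ₗ LinearMap.adjoint (U j)))) ∧
    (∑ j, LinearMap.adjoint (U j) ∘ₗ (U j ∘ₗ P ∘ₗ LinearMap.adjoint (U j)) ∘ₗ
        (∑ i, F i ∘ₗ ρ ∘ₗ LinearMap.adjoint (F i)) ∘ₗ
        (U j ∘ₗ P ∘ₗ LinearMap.adjoint (U j)) ∘ₗ U j) =
      ((∑ j, lam j : ℝ) : ℂ) • ρ := by
  classical
  simp only [← Module.End.mul_eq_comp] at hPproj hF hPorth hρcode ⊢
  have hρcode' : P * ρ * P = ρ := by rw [mul_assoc]; exact hρcode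
  set v : Fin r → (H →ₗ[ℂ] H) := fun j => LinearMap.adjoint (U j) with hv
  have hU1 : ∀ j, v j * U j = 1 := fun j => by
    rw [hv]; rw [Module.End.mul_eq_comp, (hU j).1]; rfl
  set c : Fin r → ℂ := fun j => (Real.sqrt (lam j) : ℂ) with hc
  have hcc : ∀ j, c j * c j = (lam j : ℂ) := fun j => by
    rw [hc]; rw [← Complex.ofReal_mul, Real.mul_self_sqrt (hlam j)]
  have hFadj : ∀ j, P * LinearMap.adjoint (F j) = c j • (P * v j) := by
    intro j
    have h := congrArg LinearMap.adjoint (hF j)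
    rw [map_smulₛₗ LinearMap.adjoint] at h
    rw [Module.End.mul_eq_comp, Module.End.mul_eq_comp, LinearMap.adjoint_comp,
      LinearMap.adjoint_comp, hPsa] at h
    simp only [Complex.conj_ofReal] at h
    simp only [hc, hv, Module.End.mul_eq_comp]
    exact h
  -- key per-term facts
  have keyA : ∀ j, F j * ρ * LinearMap.adjoint (F j)
      = (lam j : ℂ) • (U j * ρ * v j) := by
    intro j
    calc F j * ρ * LinearMap.adjoint (F j)
        = (F j * P) * ρ * (P * LinearMap.adjoint (F j)) := by
          conv_lhs => rw [← hρcode']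
          noncomm_ring
      _ = (c j • (U j * P)) * ρ * (c j • (P * v j)) := by rw [hF j, hFadj j]
      _ = (c j * c j) • ((U j * P) * ρ * (P * v j)) := by
          rw [smul_mul_assoc, smul_mul_assoc, mul_smul_comm, smul_smul]
      _ = (lam j : ℂ) • (U j * (P * ρ * P) * v j) := by
          rw [hcc j]
          have : (U j * P) * ρ * (P * v j) = U j * (P * ρ * P) * v j := by noncomm_ring
          rw [this]
      _ = (lam j : ℂ) • (U j * ρ * v j) := by rw [hρcode']
  have keyB : ∀ j, (U j * P * v j) * (U j * ρ * v j) * (U j * P * v j)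
      = U j * ρ * v j := by
    intro j
    have h1 : (U j * P * v j) * (U j * ρ * v j) * (U j * P * v j)
        = U j * P * (v j * U j) * ρ * ((v j * U j) * P * v j) := by noncomm_ring
    rw [h1, hU1 j]
    have h2 : U j * P * 1 * ρ * (1 * P * v j) = U j * (P * ρ * P) * v j := by noncomm_ring
    rw [h2, hρcode']
  have horth : ∀ i j, i ≠ j → (U i * P * v i) * (U j * P * v j) = 0 := by
    intro i j h
    have h0 := hPorth i j h
    calc (U i * P * v i) * (U j * P * v j)
        = (U i * (P * v i)) * (U j * (P * v j)) := by noncomm_ring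
      _ = 0 := h0
  have keyC : ∀ i j, i ≠ j →
      (U j * P * v j) * (U i * ρ * v i) * (U j * P * v j) = 0 := by
    intro i j h
    conv_lhs => rw [← keyB i]
    calc (U j * P * v j) * ((U i * P * v i) * (U i * ρ * v i) * (U i * P * v i))
          * (U j * P * v j)
        = ((U j * P * v j) * (U i * P * v i)) * (U i * ρ * v i)
          * ((U i * P * v i) * (U j * P * v j)) := by noncomm_ring
      _ = 0 := by rw [horth j i (Ne.symm h), horth i j h]; simp
  have keyD : ∀ j, v j * (U j * ρ * v j) * U j = ρ := by
    intro j
    have h1 : v j * (U j * ρ * v j) * U j = (v j * U j) * ρ * (v j * U j) := by noncomm_ring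
    rw [h1, hU1 j]; simp
  -- first part
  have part1 : (∑ j, F j * (ρ * LinearMap.adjoint (F j))) =
      ∑ j, (lam j : ℂ) • ((U j * (P * v j)) * ((U j * (ρ * v j)) * (U j * (P * v j)))) := by
    refine Finset.sum_congr rfl fun j _ => ?_
    have h1 : F j * (ρ * LinearMap.adjoint (F j)) = F j * ρ * LinearMap.adjoint (F j) := by
      noncomm_ring
    rw [h1, keyA j]
    have h2 : (U j * (P * v j)) * ((U j * (ρ * v j)) * (U j * (P * v j)))
        = (U j * P * v j) * (U j * ρ * v j) * (U j * P * v j) := by noncomm_ring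
    rw [h2, keyB j]
  refine ⟨part1, ?_⟩
  -- second part
  have hterm : ∀ j, v j * ((U j * (P * v j)) *
      ((∑ i, F i * (ρ * LinearMap.adjoint (F i))) * ((U j * (P * v j)) * U j)))
      = (lam j : ℂ) • ρ := by
    intro j
    have hS : (∑ i, F i * (ρ * LinearMap.adjoint (F i)))
        = ∑ i, (lam i : ℂ) • (U i * ρ * v i) := by
      refine Finset.sum_congr rfl fun i _ => ?_
      have h1 : F i * (ρ * LinearMap.adjoint (F i)) = F i * ρ * LinearMap.adjoint (F i) := by
        noncomm_ring
      rw [h1, keyA i]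
    rw [hS]
    simp only [Finset.mul_sum, Finset.sum_mul, smul_mul_assoc, mul_smul_comm]
    rw [Finset.sum_eq_single j]
    · congr 1
      have h1 : v j * (U j * (P * v j) * ((U j * ρ * v j) * (U j * (P * v j) * U j)))
          = v j * ((U j * P * v j) * (U j * ρ * v j) * (U j * P * v j)) * U j := by
        noncomm_ring
      rw [h1, keyB j, keyD j]
    · intro i _ hne
      have h1 : v j * (U j * (P * v j) * ((U i * ρ * v i) * (U j * (P * v j) * U j)))
          = v j * ((U j * P * v j) * (U i * ρ * v i) * (U j * P * v j)) * U j := by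
        noncomm_ring
      rw [h1, keyC i j hne]
      simp
    · intro h; exact absurd (Finset.mem_univ j) h
  calc (∑ j, v j * ((U j * (P * v j)) *
      ((∑ i, F i * (ρ * LinearMap.adjoint (F i))) * ((U j * (P * v j)) * U j))))
      = ∑ j, (lam j : ℂ) • ρ := Finset.sum_congr rfl fun j _ => hterm j
    _ = ((∑ j, lam j : ℝ) : ℂ) • ρ := by
        rw [← Finset.sum_smul, Complex.ofReal_sum]
end

section
/- (Essential uniqueness of the Schmidt decomposition with a distinguished nondegenerate coefficient) Let |Ψ⟩ ∈ H_A ⊗ H_B be a unit vector with Schmidt decomposition |Ψ⟩ = Σ_j √λ_j |a_j⟩⊗|b_j⟩, λ_0 > λ_j for all j ≥ 1. Suppose also |Ψ⟩ = √η |φ⟩⊗|ω⟩ + √(1−η) |χ⟩ where |φ⟩, |ω⟩ are unit vectors, |χ⟩ is a unit vector with (⟨id ⊗ ⟨ω|)|χ⟩ = 0 and (⟨φ|⊗id)|χ⟩ = 0, and η > 1/2. Then η = λ_0, and |φ⟩⊗|ω⟩ = e^{iθ}|a_0⟩⊗|b_0⟩ for some phase θ. -/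
/-- Concrete model of the tensor product of `ℂ^{dA}` and `ℂ^{dB}`:
`(tensorVec x y) (i, j) = x i * y j`. -/
noncomputable def tensorVec {dA dB : ℕ} (x : EuclideanSpace ℂ (Fin dA))
    (y : EuclideanSpace ℂ (Fin dB)) : EuclideanSpace ℂ (Fin dA × Fin dB) :=
  WithLp.toLp 2 (fun p : Fin dA × Fin dB => x p.1 * y p.2)

section aux
variable {dA dB : ℕ}

local notation "⟪" x ", " y "⟫" => @inner ℂ _ _ x y

lemma inner_tensor_tensor (x x' : EuclideanSpace ℂ (Fin dA)) (y y' : EuclideanSpace ℂ (Fin dB)) :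
    ⟪tensorVec x y, tensorVec x' y'⟫ = ⟪x, x'⟫ * ⟪y, y'⟫ := by
  simp only [PiLp.inner_apply, RCLike.inner_apply, Fintype.sum_prod_type, Finset.sum_mul_sum]
  refine Finset.sum_congr rfl fun i _ => Finset.sum_congr rfl fun j _ => ?_
  simp only [tensorVec, WithLp.ofLp_toLp, map_mul]
  ring

lemma inner_tensor_zero_left (x : EuclideanSpace ℂ (Fin dA)) (y : EuclideanSpace ℂ (Fin dB))
    (χ : EuclideanSpace ℂ (Fin dA × Fin dB))
    (h : ∀ i, ∑ j, (starRingEnd ℂ) (y j) * χ (i, j) = 0) :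
    ⟪tensorVec x y, χ⟫ = 0 := by
  have e : ⟪tensorVec x y, χ⟫ = ∑ i, (starRingEnd ℂ) (x i) * ∑ j, (starRingEnd ℂ) (y j) * χ (i, j) := by
    simp only [PiLp.inner_apply, RCLike.inner_apply, Fintype.sum_prod_type, Finset.mul_sum]
    refine Finset.sum_congr rfl fun i _ => Finset.sum_congr rfl fun j _ => ?_
    simp only [tensorVec, WithLp.ofLp_toLp, map_mul]
    ring
  simp [e, h]

lemma inner_tensor_zero_right (x : EuclideanSpace ℂ (Fin dA)) (y : EuclideanSpace ℂ (Fin dB))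
    (χ : EuclideanSpace ℂ (Fin dA × Fin dB))
    (h : ∀ j, ∑ i, (starRingEnd ℂ) (x i) * χ (i, j) = 0) :
    ⟪tensorVec x y, χ⟫ = 0 := by
  have e : ⟪tensorVec x y, χ⟫ = ∑ j, (starRingEnd ℂ) (y j) * ∑ i, (starRingEnd ℂ) (x i) * χ (i, j) := by
    simp only [PiLp.inner_apply, RCLike.inner_apply, Fintype.sum_prod_type, Finset.mul_sum]
    rw [Finset.sum_comm]
    refine Finset.sum_congr rfl fun j _ => Finset.sum_congr rfl fun i _ => ?_
    simp only [tensorVec, WithLp.ofLp_toLp, map_mul]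
    ring
  simp [e, h]

end aux

local notation "⟪" x ", " y "⟫" => @inner ℂ _ _ x y

/-- essential uniqueness of the Schmidt decomposition with a
distinguished nondegenerate coefficient: if a unit vector `Ψ ∈ H_A ⊗ H_B` has a
Schmidt decomposition `Ψ = Σ_j √λ_j a_j ⊗ b_j` with `λ₀ > λ_j` for `j ≥ 1`, and
also `Ψ = √η φ ⊗ ω + √(1−η) χ` with `φ, ω, χ` unit vectors, `χ` killed by both
partial contractions `id ⊗ ⟨ω|` and `⟨φ| ⊗ id`, and `η > 1/2`, then `η = λ₀`
and `φ ⊗ ω = e^{iθ} a₀ ⊗ b₀` for some phase `θ`. -/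
theorem stmt_11 (dA dB r : ℕ) (lam : Fin (r + 1) → ℝ)
    (hlam : ∀ j, 0 ≤ lam j) (hsum : ∑ j, lam j = 1)
    (hnd : ∀ j : Fin (r + 1), j ≠ 0 → lam j < lam 0)
    (a : Fin (r + 1) → EuclideanSpace ℂ (Fin dA)) (ha : Orthonormal ℂ a)
    (b : Fin (r + 1) → EuclideanSpace ℂ (Fin dB)) (hb : Orthonormal ℂ b)
    (Ψ : EuclideanSpace ℂ (Fin dA × Fin dB))
    (hSchmidt : Ψ = ∑ j, (Real.sqrt (lam j) : ℂ) • tensorVec (a j) (b j))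
    (η : ℝ) (hη : 1 / 2 < η) (hη1 : η ≤ 1)
    (φ : EuclideanSpace ℂ (Fin dA)) (hφ : ‖φ‖ = 1)
    (ω : EuclideanSpace ℂ (Fin dB)) (hω : ‖ω‖ = 1)
    (χ : EuclideanSpace ℂ (Fin dA × Fin dB)) (hχ : ‖χ‖ = 1)
    (hdecomp : Ψ = (Real.sqrt η : ℂ) • tensorVec φ ω +
      (Real.sqrt (1 - η) : ℂ) • χ)
    (hχω : ∀ i : Fin dA, ∑ j : Fin dB, (starRingEnd ℂ) (ω j) * χ (i, j) = 0)
    (hχφ : ∀ j : Fin dB, ∑ i : Fin dA, (starRingEnd ℂ) (φ i) * χ (i, j) = 0) :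
    η = lam 0 ∧ ∃ θ : ℝ, tensorVec φ ω =
      Complex.exp (θ * Complex.I) • tensorVec (a 0) (b 0) := by
  classical
  have key : (∑ j, (Real.sqrt (lam j) : ℂ) • tensorVec (a j) (b j))
      = (Real.sqrt η : ℂ) • tensorVec φ ω + (Real.sqrt (1 - η) : ℂ) • χ :=
    hSchmidt.symm.trans hdecomp
  have horthA := orthonormal_iff_ite.mp ha
  have horthB := orthonormal_iff_ite.mp hb
  have hφφ : ⟪φ, φ⟫ = 1 := by
    rw [@inner_self_eq_norm_sq_to_K ℂ, hφ]; norm_num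
  have hωω : ⟪ω, ω⟫ = 1 := by
    rw [@inner_self_eq_norm_sq_to_K ℂ, hω]; norm_num
  have hη0 : (0:ℝ) < η := by linarith
  have hsη : (Real.sqrt η : ℂ) ≠ 0 := by
    simp [Complex.ofReal_ne_zero, Real.sqrt_ne_zero', hη0]
  have hee : (Real.sqrt η : ℂ) * (Real.sqrt η : ℂ) = (η : ℂ) := by
    rw [← Complex.ofReal_mul, Real.mul_self_sqrt hη0.le]
  have hll : ∀ k, (Real.sqrt (lam k) : ℂ) * (Real.sqrt (lam k) : ℂ) = (lam k : ℂ) := by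
    intro k; rw [← Complex.ofReal_mul, Real.mul_self_sqrt (hlam k)]
  -- E1 : √λ_k ⟪ω, b k⟫ = √η ⟪a k, φ⟫
  have E1 : ∀ k, (Real.sqrt (lam k) : ℂ) * ⟪ω, b k⟫ = (Real.sqrt η : ℂ) * ⟪a k, φ⟫ := by
    intro k
    have h := congrArg (fun v => ⟪tensorVec (a k) ω, v⟫) key
    simp only [inner_sum, inner_smul_right, inner_add_right, inner_tensor_tensor,
      inner_tensor_zero_left _ _ _ hχω, mul_zero, add_zero, hωω, mul_one] at h
    rw [Finset.sum_eq_single k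
      (fun m _ hm => by rw [horthA k m, if_neg (Ne.symm hm)]; simp)
      (fun hh => absurd (Finset.mem_univ k) hh)] at h
    rw [horthA k k, if_pos rfl, one_mul] at h
    exact h
  -- E2c : √λ_k ⟪φ, a k⟫ = √η ⟪b k, ω⟫
  have E2c : ∀ k, (Real.sqrt (lam k) : ℂ) * ⟪φ, a k⟫ = (Real.sqrt η : ℂ) * ⟪b k, ω⟫ := by
    intro k
    have h := congrArg (fun v => ⟪tensorVec φ (b k), v⟫) key
    simp only [inner_sum, inner_smul_right, inner_add_right, inner_tensor_tensor,
      inner_tensor_zero_right _ _ _ hχφ, mul_zero, add_zero, hφφ, one_mul] at h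
    rw [Finset.sum_eq_single k
      (fun m _ hm => by rw [horthB k m, if_neg (Ne.symm hm)]; simp)
      (fun hh => absurd (Finset.mem_univ k) hh)] at h
    rw [horthB k k, if_pos rfl, mul_one] at h
    exact h
  -- E2 : √λ_k ⟪a k, φ⟫ = √η ⟪ω, b k⟫
  have E2 : ∀ k, (Real.sqrt (lam k) : ℂ) * ⟪a k, φ⟫ = (Real.sqrt η : ℂ) * ⟪ω, b k⟫ := by
    intro k
    have h' := congrArg (starRingEnd ℂ) (E2c k)
    simpa only [map_mul, Complex.conj_ofReal, inner_conj_symm] using h'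
  -- λ_k ⟪a k, φ⟫ = η ⟪a k, φ⟫
  have hmulD : ∀ k, (lam k : ℂ) * ⟪a k, φ⟫ = (η : ℂ) * ⟪a k, φ⟫ := by
    intro k
    calc (lam k : ℂ) * ⟪a k, φ⟫
        = (Real.sqrt (lam k):ℂ) * ((Real.sqrt (lam k):ℂ) * ⟪a k, φ⟫) := by
          rw [← mul_assoc, hll k]
      _ = (Real.sqrt (lam k):ℂ) * ((Real.sqrt η:ℂ) * ⟪ω, b k⟫) := by rw [E2 k]
      _ = (Real.sqrt η:ℂ) * ((Real.sqrt (lam k):ℂ) * ⟪ω, b k⟫) := by ring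
      _ = (Real.sqrt η:ℂ) * ((Real.sqrt η:ℂ) * ⟪a k, φ⟫) := by rw [E1 k]
      _ = (η:ℂ) * ⟪a k, φ⟫ := by rw [← mul_assoc, hee]
  -- hCeq : ∑ √λ_k ⟪φ, a k⟫ ⟪ω, b k⟫ = √η
  have hCeq : ∑ k, (Real.sqrt (lam k) : ℂ) * (⟪φ, a k⟫ * ⟪ω, b k⟫) = (Real.sqrt η : ℂ) := by
    have h := congrArg (fun v => ⟪tensorVec φ ω, v⟫) key
    simpa only [inner_sum, inner_smul_right, inner_add_right, inner_tensor_tensor,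
      inner_tensor_zero_left _ _ _ hχω, mul_zero, add_zero, hφφ, hωω, mul_one] using h
  have hsumd : ∑ k, ⟪φ, a k⟫ * ⟪a k, φ⟫ = 1 := by
    have hstep : ∑ k, (Real.sqrt (lam k) : ℂ) * (⟪φ, a k⟫ * ⟪ω, b k⟫)
        = (Real.sqrt η : ℂ) * ∑ k, ⟪φ, a k⟫ * ⟪a k, φ⟫ := by
      rw [Finset.mul_sum]
      refine Finset.sum_congr rfl fun k _ => ?_
      calc (Real.sqrt (lam k) : ℂ) * (⟪φ, a k⟫ * ⟪ω, b k⟫)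
          = ⟪φ, a k⟫ * ((Real.sqrt (lam k) : ℂ) * ⟪ω, b k⟫) := by ring
        _ = ⟪φ, a k⟫ * ((Real.sqrt η : ℂ) * ⟪a k, φ⟫) := by rw [E1 k]
        _ = (Real.sqrt η : ℂ) * (⟪φ, a k⟫ * ⟪a k, φ⟫) := by ring
    have h1 : (Real.sqrt η : ℂ) * 1 = (Real.sqrt η : ℂ) * ∑ k, ⟪φ, a k⟫ * ⟪a k, φ⟫ := by
      rw [mul_one]
      exact hCeq.symm.trans hstep
    exact (mul_left_cancel₀ hsη h1).symm
  -- find k0 with ⟪a k0, φ⟫ ≠ 0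
  obtain ⟨k0, hk0⟩ : ∃ k, ⟪a k, φ⟫ ≠ 0 := by
    by_contra hno
    push_neg at hno
    simp [hno] at hsumd
  have hlamk0 : lam k0 = η := by
    have h2 : (lam k0 : ℂ) = (η : ℂ) := mul_right_cancel₀ hk0 (hmulD k0)
    exact_mod_cast h2
  have hηlam : η = lam 0 := by
    by_contra hne
    have hk0ne : k0 ≠ 0 := by
      intro hh; rw [hh] at hlamk0; exact hne hlamk0.symm
    have hlt := hnd k0 hk0ne
    have hpair : lam 0 + lam k0 ≤ 1 := by
      have hle := Finset.sum_le_sum_of_subset_of_nonneg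
        (Finset.subset_univ ({0, k0} : Finset (Fin (r+1)))) (fun i _ _ => hlam i)
      rw [Finset.sum_pair (Ne.symm hk0ne), hsum] at hle
      exact hle
    linarith
  have hdzero : ∀ k, k ≠ 0 → ⟪a k, φ⟫ = 0 := by
    intro k hk
    by_contra hdk
    have h2 : (lam k : ℂ) = (η : ℂ) := mul_right_cancel₀ hdk (hmulD k)
    have h3 : lam k = η := by exact_mod_cast h2
    have := hnd k hk
    linarith
  have hd0 : ⟪φ, a 0⟫ * ⟪a 0, φ⟫ = 1 := by
    rw [← hsumd]
    rw [Finset.sum_eq_single 0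
      (fun m _ hm => by rw [hdzero m hm, mul_zero])
      (fun hh => absurd (Finset.mem_univ 0) hh)]
  have hc0d0 : ⟪ω, b 0⟫ = ⟪a 0, φ⟫ := by
    have h := E1 0
    rw [hηlam] at h
    exact mul_left_cancel₀ (by rw [← hηlam]; exact hsη) h
  have hb0ω : ⟪b 0, ω⟫ = ⟪φ, a 0⟫ := by
    have h' := congrArg (starRingEnd ℂ) hc0d0
    simpa only [inner_conj_symm] using h'
  refine ⟨hηlam, 0, ?_⟩
  have hvu : ⟪tensorVec (a 0) (b 0), tensorVec φ ω⟫ = 1 := by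
    rw [inner_tensor_tensor, hb0ω, mul_comm]
    exact hd0
  have huv : ⟪tensorVec φ ω, tensorVec (a 0) (b 0)⟫ = 1 := by
    rw [← inner_conj_symm, hvu, map_one]
  have huu : ⟪tensorVec φ ω, tensorVec φ ω⟫ = 1 := by
    rw [inner_tensor_tensor, hφφ, hωω, mul_one]
  have hvv : ⟪tensorVec (a 0) (b 0), tensorVec (a 0) (b 0)⟫ = 1 := by
    rw [inner_tensor_tensor]
    simp [horthA 0 0, horthB 0 0, ha.1 0, hb.1 0]
  have hz : ⟪tensorVec φ ω - tensorVec (a 0) (b 0),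
      tensorVec φ ω - tensorVec (a 0) (b 0)⟫ = 0 := by
    rw [inner_sub_sub_self, huu, huv, hvu, hvv]
    ring
  have heq : tensorVec φ ω = tensorVec (a 0) (b 0) :=
    sub_eq_zero.mp (inner_self_eq_zero.mp hz)
  simpa [Complex.exp_zero] using heq
end
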